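/- Let U ⊆ ℂ be a nonempty open connected set, let f, ζ, h : ℂ → ℂ be functions such that f and ζ are real-differentiable at every point of U, such that for all z ∈ U the Wirtinger equations ∂ζ/∂z̄(z) = h(z) and ∂f/∂z̄(z) + h(z)·f(z) = 0 hold, and suppose f is not identically zero on U. Then every zero of f in U has finite positive order: if z₀ ∈ U and f(z₀) = 0, there exist a positive integer n and a nonzero complex number c such that f(z)/(z − z₀)^n tends to c as z tends to z₀ within U \ {z₀}. -/

import Mathlib

open Filter Topology

/-- The Wirtinger derivative ∂g/∂z̄ of `g : ℂ → ℂ` at `z`, defined via the real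
Fréchet derivative as `(1/2)(Dg(z)(1) + i·Dg(z)(i))`. -/
noncomputable def wirtingerBar (g : ℂ → ℂ) (z : ℂ) : ℂ :=
  (1 / 2 : ℂ) * (fderiv ℝ g z 1 + Complex.I * fderiv ℝ g z Complex.I)

/-- Real-differentiable with vanishing Wirtinger derivative ⇒ complex differentiable. -/
lemma diffC_of_wirtingerBar_zero {g : ℂ → ℂ} {z : ℂ}
    (hd : DifferentiableAt ℝ g z) (h0 : wirtingerBar g z = 0) :
    DifferentiableAt ℂ g z := by
  set L := fderiv ℝ g z with hLdef
  have hL : HasFDerivAt g L z := hd.hasFDerivAt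
  have hCI : L Complex.I = Complex.I * L 1 := by
    have : (1 / 2 : ℂ) * (L 1 + Complex.I * L Complex.I) = 0 := h0
    have h1 : L 1 + Complex.I * L Complex.I = 0 := by
      field_simp at this; linear_combination this
    linear_combination -Complex.I * h1 + (Complex.I_sq) * L Complex.I
  set c : ℂ := L 1 with hc
  have key : ∀ v : ℂ, L v = v * c := by
    intro v
    have hv : v = (v.re : ℝ) • (1 : ℂ) + (v.im : ℝ) • Complex.I := by
      rw [Complex.real_smul, Complex.real_smul, mul_one, Complex.re_add_im]
    calc L v = L ((v.re : ℝ) • (1 : ℂ) + (v.im : ℝ) • Complex.I) := by rw [← hv]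
    _ = (v.re : ℝ) • L 1 + (v.im : ℝ) • L Complex.I := by
        rw [map_add, map_smul, map_smul]
    _ = v * c := by
        rw [Complex.real_smul, Complex.real_smul, hCI, ← hc]
        nth_rewrite 3 [← Complex.re_add_im v]
        ring
  have hL' : HasFDerivAt g ((ContinuousLinearMap.smulRight (1 : ℂ →L[ℂ] ℂ) c)) z := by
    refine .of_isLittleO (hL.isLittleO.congr' ?_ (Eventually.of_forall fun _ => rfl))
    filter_upwards with w
    simp [key (w - z), smul_eq_mul]
  exact hL'.differentiableAt

/-- If `f` and `ζ` are real-differentiable on a nonempty open connected set `U ⊆ ℂ`,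
satisfy `∂ζ/∂z̄ = h` and `∂f/∂z̄ + h·f = 0` on `U`, and `f` is not identically zero on `U`,
then every zero of `f` in `U` has finite positive order: there are `n ≥ 1` and `c ≠ 0`
with `f z / (z - z₀)^n → c` as `z → z₀` within `U \ {z₀}`. -/
theorem zero_order_of_wirtinger_eq (U : Set ℂ) (hU : IsOpen U)
    (hUconn : IsConnected U)
    (f ζ h : ℂ → ℂ)
    (hf : ∀ z ∈ U, DifferentiableAt ℝ f z)
    (hζ : ∀ z ∈ U, DifferentiableAt ℝ ζ z)
    (hζeq : ∀ z ∈ U, wirtingerBar ζ z = h z)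
    (hfeq : ∀ z ∈ U, wirtingerBar f z + h z * f z = 0)
    (hfne : ¬ ∀ z ∈ U, f z = 0) :
    ∀ z₀ ∈ U, f z₀ = 0 →
      ∃ n : ℕ, 0 < n ∧ ∃ c : ℂ, c ≠ 0 ∧
        Tendsto (fun z => f z / (z - z₀) ^ n) (𝓝[U \ {z₀}] z₀) (𝓝 c) := by
  intro z₀ hz₀ hfz₀
  set g : ℂ → ℂ := fun w => f w * Complex.exp (ζ w) with hgdef
  -- g is complex-differentiable on U
  have hgC : ∀ z ∈ U, DifferentiableAt ℂ g z := by
    intro z hz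
    set L := fderiv ℝ f z with hL
    set M := fderiv ℝ ζ z with hM
    have hexpC : HasFDerivAt (fun w => Complex.exp (ζ w))
        (((ContinuousLinearMap.smulRight (1 : ℂ →L[ℂ] ℂ)
            (Complex.exp (ζ z))).restrictScalars ℝ).comp M) z :=
      ((Complex.hasDerivAt_exp (ζ z)).hasFDerivAt.restrictScalars ℝ).comp z
        (hζ z hz).hasFDerivAt
    have hmul : HasFDerivAt g
        (f z • (((ContinuousLinearMap.smulRight (1 : ℂ →L[ℂ] ℂ)
            (Complex.exp (ζ z))).restrictScalars ℝ).comp M)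
          + L.smulRight (Complex.exp (ζ z))) z :=
      (hf z hz).hasFDerivAt.mul' hexpC
    have hd : DifferentiableAt ℝ g z := hmul.differentiableAt
    refine diffC_of_wirtingerBar_zero hd ?_
    have hfd : fderiv ℝ g z = f z • (((ContinuousLinearMap.smulRight (1 : ℂ →L[ℂ] ℂ)
            (Complex.exp (ζ z))).restrictScalars ℝ).comp M)
          + L.smulRight (Complex.exp (ζ z)) := hmul.fderiv
    have e1 : wirtingerBar ζ z = h z := hζeq z hz
    have e2 : wirtingerBar f z + h z * f z = 0 := hfeq z hz
    rw [wirtingerBar, ← hM] at e1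
    rw [wirtingerBar, ← hL] at e2
    rw [wirtingerBar, hfd]
    simp only [ContinuousLinearMap.add_apply, ContinuousLinearMap.smul_apply,
      ContinuousLinearMap.coe_comp', Function.comp_apply,
      ContinuousLinearMap.coe_restrictScalars', ContinuousLinearMap.smulRight_apply,
      ContinuousLinearMap.one_apply, smul_eq_mul]
    linear_combination Complex.exp (ζ z) * e2 + Complex.exp (ζ z) * f z * e1
  have hga : AnalyticOnNhd ℂ g U :=
    DifferentiableOn.analyticOnNhd (fun z hz => (hgC z hz).differentiableWithinAt) hU
  have hA : AnalyticAt ℂ g z₀ := hga z₀ hz₀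
  -- order is finite
  have hne : analyticOrderAt g z₀ ≠ ⊤ := by
    intro htop
    rw [analyticOrderAt_eq_top] at htop
    have := hga.eqOn_zero_of_preconnected_of_eventuallyEq_zero
      hUconn.isPreconnected hz₀ htop
    apply hfne
    intro z hz
    have hgz : g z = 0 := this hz
    have : f z * Complex.exp (ζ z) = 0 := hgz
    rcases mul_eq_zero.mp this with h' | h'
    · exact h'
    · exact absurd h' (Complex.exp_ne_zero _)
  obtain ⟨n, hn⟩ := WithTop.ne_top_iff_exists.mp hne
  obtain ⟨p, hpA, hp0, hev⟩ := (hA.analyticOrderAt_eq_natCast (n := n)).mp hn.symm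
  have hnpos : 0 < n := by
    rcases Nat.eq_zero_or_pos n with rfl | hpos
    · exfalso
      have hg0 : g z₀ = 0 := by
        simp [hgdef, hfz₀]
      have := hev.self_of_nhds
      simp only [pow_zero, one_smul] at this
      exact hp0 (by rw [← this, hg0])
    · exact hpos
  refine ⟨n, hnpos, p z₀ * Complex.exp (-ζ z₀), ?_, ?_⟩
  · exact mul_ne_zero hp0 (Complex.exp_ne_zero _)
  · have hcont : Tendsto (fun z => p z * Complex.exp (-ζ z)) (𝓝[U \ {z₀}] z₀)
        (𝓝 (p z₀ * Complex.exp (-ζ z₀))) := by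
      apply Tendsto.mono_left _ nhdsWithin_le_nhds
      exact (hpA.continuousAt.tendsto).mul
        ((Complex.continuous_exp.continuousAt.tendsto).comp
          ((hζ z₀ hz₀).continuousAt.neg.tendsto))
    refine hcont.congr' ?_
    have hev' : ∀ᶠ z in 𝓝[U \ {z₀}] z₀, g z = (z - z₀) ^ n • p z :=
      nhdsWithin_le_nhds hev
    filter_upwards [hev', self_mem_nhdsWithin] with z hz hzU
    have hzne : z ≠ z₀ := hzU.2
    have hsub : (z - z₀) ^ n ≠ 0 := pow_ne_zero _ (sub_ne_zero.mpr hzne)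
    have hfz : f z = g z * Complex.exp (-ζ z) := by
      rw [hgdef]
      simp [Complex.exp_neg, mul_assoc, mul_inv_cancel₀ (Complex.exp_ne_zero (ζ z))]
    rw [eq_comm, hfz, hz, smul_eq_mul]
    field_simp
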